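/- arXiv:2502.09249 — 4 statements merged into one kernel-verified Lean document; each statement's English description precedes it below -/
import Mathlib

section
/- Adversary lower bound for purification: let 0 < δ < 1/2 and let O₀, O₁ be the reflections in ℂ² about φ₀ = √(1/2+δ)e₀ + √(1/2−δ)e₁ and φ₁ = √(1/2−δ)e₀ + √(1/2+δ)e₁ respectively. Suppose H is a Hilbert space and v₀, v₁ ∈ H ⊗ ℂ² satisfy the constraint 1 − (−1) = ⟨v₀, (I ⊗ (I − O₀*O₁)) v₁⟩, i.e. 2 = ⟨v₀, v₁⟩ − ⟨(I⊗O₀)v₀, (I⊗O₁)v₁⟩. Then max(‖v₀‖², ‖v₁‖²) ≥ 1/(2δ). -/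
theorem stmt_4 {H : Type*} [NormedAddCommGroup H] [InnerProductSpace ℂ H]
    (δ a b : ℝ) (hδ0 : 0 < δ) (hδ1 : δ < 1/2)
    (ha : a = Real.sqrt (1/2 + δ)) (hb : b = Real.sqrt (1/2 - δ))
    (O₀ O₁ : Matrix (Fin 2) (Fin 2) ℂ)
    (hO₀ : O₀ = !![(2*a^2 - 1 : ℂ), (2*a*b : ℂ); (2*a*b : ℂ), (2*b^2 - 1 : ℂ)])
    (hO₁ : O₁ = !![(2*b^2 - 1 : ℂ), (2*a*b : ℂ); (2*a*b : ℂ), (2*a^2 - 1 : ℂ)])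
    (v₀ v₁ w₀ w₁ : PiLp 2 (fun _ : Fin 2 => H))
    (hw₀ : ∀ i, w₀ i = ∑ j, O₀ i j • v₀ j)
    (hw₁ : ∀ i, w₁ i = ∑ j, O₁ i j • v₁ j)
    (hconstraint : (2 : ℂ) = (inner ℂ v₀ v₁ : ℂ) - (inner ℂ w₀ w₁ : ℂ)) :
    1 / (2 * δ) ≤ max (‖v₀‖^2) (‖v₁‖^2) := by
  have ha2 : a^2 = 1/2 + δ := by rw [ha]; exact Real.sq_sqrt (by linarith)
  have hb2 : b^2 = 1/2 - δ := by rw [hb]; exact Real.sq_sqrt (by linarith)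
  obtain ⟨s, t, hs, ht⟩ : ∃ s t : ℝ, s = 2*δ ∧ t = 2*a*b := ⟨_, _, rfl, rfl⟩
  have hst : s^2 + t^2 = 1 := by
    have h : t^2 = 4*(a^2*(b^2)) := by rw [ht]; ring
    rw [h, ha2, hb2, hs]; ring
  have hsC : (2*(a:ℂ)^2 - 1) = (s:ℝ) := by
    have : ((a:ℂ))^2 = ((a^2 : ℝ) : ℂ) := by push_cast; ring
    rw [this, ha2]; push_cast [hs]; ring
  have hsC' : (2*(b:ℂ)^2 - 1) = -((s:ℝ):ℂ) := by
    have : ((b:ℂ))^2 = ((b^2 : ℝ) : ℂ) := by push_cast; ring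
    rw [this, hb2]; push_cast [hs]; ring
  have htC : (2*(a:ℂ)*(b:ℂ)) = ((t:ℝ):ℂ) := by push_cast [ht]; ring
  have hw00 : w₀ 0 = ((s:ℝ):ℂ) • v₀ 0 + ((t:ℝ):ℂ) • v₀ 1 := by
    rw [hw₀]; simp [hO₀, Fin.sum_univ_two, hsC, htC]
  have hw01 : w₀ 1 = ((t:ℝ):ℂ) • v₀ 0 - ((s:ℝ):ℂ) • v₀ 1 := by
    rw [hw₀]; simp [hO₀, Fin.sum_univ_two, hsC', htC, sub_eq_add_neg, neg_smul]
  have hw10 : w₁ 0 = -((s:ℝ):ℂ) • v₁ 0 + ((t:ℝ):ℂ) • v₁ 1 := by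
    rw [hw₁]; simp [hO₁, Fin.sum_univ_two, hsC', htC]
  have hw11 : w₁ 1 = ((t:ℝ):ℂ) • v₁ 0 + ((s:ℝ):ℂ) • v₁ 1 := by
    rw [hw₁]; simp [hO₁, Fin.sum_univ_two, hsC, htC]
  set r : PiLp 2 (fun _ : Fin 2 => H) :=
    (WithLp.equiv 2 (∀ _ : Fin 2, H)).symm
      ![((s:ℝ):ℂ) • v₁ 0 - ((t:ℝ):ℂ) • v₁ 1, ((t:ℝ):ℂ) • v₁ 0 + ((s:ℝ):ℂ) • v₁ 1] with hrdef
  have hr0 : r 0 = ((s:ℝ):ℂ) • v₁ 0 - ((t:ℝ):ℂ) • v₁ 1 := rfl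
  have hr1 : r 1 = ((t:ℝ):ℂ) • v₁ 0 + ((s:ℝ):ℂ) • v₁ 1 := rfl
  have hstC : ((s:ℝ):ℂ)^2 + ((t:ℝ):ℂ)^2 = 1 := by exact_mod_cast congrArg Complex.ofReal hst
  have key0 : (inner ℂ v₀ v₁ : ℂ) - (inner ℂ w₀ w₁ : ℂ) = 2 * ((s:ℝ):ℂ) * (inner ℂ v₀ r : ℂ) := by
    simp only [PiLp.inner_apply, Fin.sum_univ_two, hw00, hw01, hw10, hw11, hr0, hr1,
      inner_add_left, inner_add_right, inner_sub_left, inner_sub_right,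
      inner_smul_left, inner_smul_right, neg_smul, inner_neg_left, inner_neg_right,
      Complex.conj_ofReal]
    linear_combination (-(inner ℂ (v₀ 0) (v₁ 0) : ℂ) - (inner ℂ (v₀ 1) (v₁ 1) : ℂ)) * hstC
  have key : (2 : ℂ) = 2 * ((s:ℝ):ℂ) * (inner ℂ v₀ r : ℂ) := hconstraint.trans key0
  -- norm of r equals norm of v₁
  have hnr : ‖r‖ = ‖v₁‖ := by
    have hip : (inner ℂ r r : ℂ) = (inner ℂ v₁ v₁ : ℂ) := by
      simp only [PiLp.inner_apply, Fin.sum_univ_two, hr0, hr1,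
        inner_add_left, inner_add_right, inner_sub_left, inner_sub_right,
        inner_smul_left, inner_smul_right, Complex.conj_ofReal]
      linear_combination ((inner ℂ (v₁ 0) (v₁ 0) : ℂ) + (inner ℂ (v₁ 1) (v₁ 1) : ℂ)) * hstC
    have h2 : ‖r‖^2 = ‖v₁‖^2 := by
      rw [inner_self_eq_norm_sq_to_K (𝕜 := ℂ), inner_self_eq_norm_sq_to_K (𝕜 := ℂ)] at hip
      exact_mod_cast hip
    have h3 := congrArg Real.sqrt h2
    rwa [Real.sqrt_sq (norm_nonneg _), Real.sqrt_sq (norm_nonneg _)] at h3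
  -- Cauchy–Schwarz
  have hcs : ‖(inner ℂ v₀ r : ℂ)‖ ≤ ‖v₀‖ * ‖v₁‖ := by
    rw [← hnr]; exact norm_inner_le_norm v₀ r
  have hs0 : 0 < s := by rw [hs]; linarith
  have habs : (2:ℝ) = 2 * s * ‖(inner ℂ v₀ r : ℂ)‖ := by
    have h := congrArg (fun z : ℂ => ‖z‖) key
    simp only [norm_mul, Complex.norm_real, Real.norm_eq_abs, abs_of_pos hs0] at h
    simpa using h
  have h2 : (2:ℝ) ≤ 2 * s * (‖v₀‖ * ‖v₁‖) :=
    habs.trans_le (mul_le_mul_of_nonneg_left hcs (by positivity))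
  have hmax : ‖v₀‖ * ‖v₁‖ ≤ max (‖v₀‖^2) (‖v₁‖^2) := by
    rcases le_total ‖v₀‖ ‖v₁‖ with h | h
    · refine le_max_of_le_right ?_
      calc ‖v₀‖*‖v₁‖ ≤ ‖v₁‖*‖v₁‖ := mul_le_mul_of_nonneg_right h (norm_nonneg _)
        _ = ‖v₁‖^2 := (sq ‖v₁‖).symm
    · refine le_max_of_le_left ?_
      calc ‖v₀‖*‖v₁‖ ≤ ‖v₀‖*‖v₀‖ := mul_le_mul_of_nonneg_left h (norm_nonneg _)
        _ = ‖v₀‖^2 := (sq ‖v₀‖).symm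
  have hfin : (2:ℝ) ≤ 2 * s * max (‖v₀‖^2) (‖v₁‖^2) :=
    h2.trans (mul_le_mul_of_nonneg_left hmax (by positivity))
  rw [div_le_iff₀ (by linarith)]
  rw [hs] at hfin
  nlinarith [hfin]
end

section
/- Existence and uniqueness of transduction action: let H and L be Hilbert spaces (finite-dimensional) and S a unitary on H ⊕ L. For every ξ ∈ H there exist τ ∈ H and v ∈ L such that S(ξ ⊕ v) = τ ⊕ v, and τ is uniquely determined by ξ. Moreover, the map ξ ↦ τ is unitary on H. -/
set_option linter.unusedSectionVars false

namespace Stmt5Aux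

variable {H L : Type*}
    [NormedAddCommGroup H] [InnerProductSpace ℂ H] [FiniteDimensional ℂ H]
    [NormedAddCommGroup L] [InnerProductSpace ℂ L] [FiniteDimensional ℂ L]

noncomputable def emk (ξ : H) (v : L) : WithLp 2 (H × L) := (WithLp.equiv 2 (H × L)).symm (ξ, v)

lemma emk_fst (ξ : H) (v : L) : (emk ξ v).fst = ξ := rfl
lemma emk_snd (ξ : H) (v : L) : (emk ξ v).snd = v := rfl
lemma emk_eta (x : WithLp 2 (H × L)) : emk x.fst x.snd = x := rfl
lemma emk_add (ξ ξ' : H) (v v' : L) : emk ξ v + emk ξ' v' = emk (ξ + ξ') (v + v') := rfl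
lemma emk_sub (ξ ξ' : H) (v v' : L) : emk ξ v - emk ξ' v' = emk (ξ - ξ') (v - v') := rfl
lemma emk_smul (c : ℂ) (ξ : H) (v : L) : c • emk ξ v = emk (c • ξ) (c • v) := rfl
lemma emk_inner (ξ ξ' : H) (v v' : L) :
    (inner ℂ (emk ξ v) (emk ξ' v') : ℂ) = inner ℂ ξ ξ' + inner ℂ v v' := rfl
lemma emk_ext {ξ ξ' : H} {v v' : L} (h1 : ξ = ξ') (h2 : v = v') : emk ξ v = emk ξ' v' := by
  rw [h1, h2]
lemma emk_inj {ξ ξ' : H} {v v' : L} (h : emk ξ v = emk ξ' v') : ξ = ξ' ∧ v = v' :=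
  ⟨congrArg WithLp.fst h, congrArg WithLp.snd h⟩

/-- lower-right block of `S`. -/
noncomputable def Dop (S : WithLp 2 (H × L) ≃ₗᵢ[ℂ] WithLp 2 (H × L)) : L →ₗ[ℂ] L :=
  (LinearMap.snd ℂ H L ∘ₗ (WithLp.linearEquiv 2 ℂ (H × L)).toLinearMap) ∘ₗ
    S.toLinearEquiv.toLinearMap ∘ₗ
      ((WithLp.linearEquiv 2 ℂ (H × L)).symm.toLinearMap ∘ₗ LinearMap.inr ℂ H L)

variable (S : WithLp 2 (H × L) ≃ₗᵢ[ℂ] WithLp 2 (H × L))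

lemma Dop_apply (v : L) : Dop S v = (S (emk 0 v)).snd := rfl

/-- if the lower-right block fixes `v` then `S` fixes `(0, v)`. -/
lemma fix_of_Dfix (v : L) (h : Dop S v = v) : S (emk (0 : H) v) = emk (0 : H) v := by
  have hinner : (inner ℂ (S (emk (0:H) v)) (S (emk (0:H) v)) : ℂ)
      = inner ℂ (emk (0:H) v) (emk (0:H) v) := S.inner_map_map _ _
  set x := S (emk (0:H) v) with hx
  have h2 : x.snd = v := h
  have hexp : (inner ℂ x x : ℂ) = inner ℂ x.fst x.fst + inner ℂ x.snd x.snd := rfl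
  have h1 : (inner ℂ x.fst x.fst : ℂ) = 0 := by
    rw [hexp, emk_inner, h2] at hinner
    simpa using hinner
  have h1' : x.fst = 0 := inner_self_eq_zero.mp h1
  rw [← emk_eta x, h1', h2]

lemma symm_fix_of_Dfix (v : L) (h : Dop S v = v) : S.symm (emk (0 : H) v) = emk (0 : H) v := by
  conv_lhs => rw [← fix_of_Dfix S v h]
  exact S.symm_apply_apply _

/-- fixed vectors of `Dop S` and `Dop S.symm` coincide. -/
lemma Dfix_symm_iff (v : L) : Dop S.symm v = v ↔ Dop S v = v := by
  constructor
  · intro h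
    have h1 := fix_of_Dfix S.symm v h
    have h2 : S (emk (0:H) v) = emk (0:H) v := by
      conv_lhs => rw [← h1]
      simpa using S.apply_symm_apply _
    exact congrArg WithLp.snd h2
  · intro h
    exact congrArg WithLp.snd (symm_fix_of_Dfix S v h)

lemma adjoint_Dop : LinearMap.adjoint (Dop S) = Dop S.symm := by
  symm
  rw [LinearMap.eq_adjoint_iff]
  intro w v
  have key : (inner ℂ (S.symm (emk (0:H) w)) (emk (0:H) v) : ℂ)
      = inner ℂ (emk (0:H) w) (S (emk (0:H) v)) := by
    rw [← S.inner_map_map (S.symm _), S.apply_symm_apply]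
  have lhs : (inner ℂ (Dop S.symm w) v : ℂ)
      = inner ℂ (S.symm (emk (0:H) w)) (emk (0:H) v) := by
    rw [Dop_apply]
    conv_rhs => rw [← emk_eta (S.symm (emk (0:H) w)), emk_inner]
    simp
  have rhs : (inner ℂ w (Dop S v) : ℂ)
      = inner ℂ (emk (0:H) w) (S (emk (0:H) v)) := by
    rw [Dop_apply]
    conv_rhs => rw [← emk_eta (S (emk (0:H) v)), emk_inner]
    simp
  rw [lhs, rhs, key]




/-- upper-right block `C`. -/
lemma range_one_sub_Dop (ξ : H) :
    (S (emk ξ (0:L))).snd ∈ LinearMap.range (LinearMap.id - Dop S) := by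
  set T : L →ₗ[ℂ] L := LinearMap.id - Dop S with hT
  have hid : LinearMap.adjoint (LinearMap.id : L →ₗ[ℂ] L) = LinearMap.id := by
    have : (LinearMap.id : L →ₗ[ℂ] L) = (1 : L →ₗ[ℂ] L) := rfl
    rw [this, ← LinearMap.star_eq_adjoint, star_one]
  have hadj : LinearMap.adjoint T = LinearMap.id - Dop S.symm := by
    rw [hT, map_sub, adjoint_Dop, hid]
  have hker : LinearMap.ker (LinearMap.adjoint T) = LinearMap.ker T := by
    ext v
    rw [hadj, hT, LinearMap.mem_ker, LinearMap.mem_ker, LinearMap.sub_apply,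
      LinearMap.sub_apply, LinearMap.id_apply, sub_eq_zero, sub_eq_zero]
    exact ⟨fun h => ((Dfix_symm_iff S v).mp h.symm).symm,
      fun h => ((Dfix_symm_iff S v).mpr h.symm).symm⟩
  have hle : LinearMap.range T ≤ (LinearMap.ker (LinearMap.adjoint T))ᗮ := by
    rintro _ ⟨x, rfl⟩
    intro u hu
    rw [LinearMap.mem_ker] at hu
    have := LinearMap.adjoint_inner_left T x u
    rw [hu, inner_zero_left] at this
    exact this.symm
  have hdim : Module.finrank ℂ (LinearMap.range T)
      = Module.finrank ℂ ((LinearMap.ker (LinearMap.adjoint T))ᗮ) := by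
    have h1 := LinearMap.finrank_range_add_finrank_ker T
    have h2 := Submodule.finrank_add_finrank_orthogonal
      (K := LinearMap.ker (LinearMap.adjoint T))
    rw [hker] at h2 ⊢
    omega
  have hrange : LinearMap.range T = (LinearMap.ker (LinearMap.adjoint T))ᗮ :=
    Submodule.eq_of_le_of_finrank_eq hle hdim
  rw [hrange]
  intro u hu
  rw [hadj, LinearMap.mem_ker, LinearMap.sub_apply, LinearMap.id_apply, sub_eq_zero] at hu
  have hfix : S.symm (emk (0:H) u) = emk (0:H) u := fix_of_Dfix S.symm u hu.symm
  have key : (inner ℂ (emk (0:H) u) (S (emk ξ (0:L))) : ℂ) = 0 := by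
    calc (inner ℂ (emk (0:H) u) (S (emk ξ (0:L))) : ℂ)
        = inner ℂ (S (S.symm (emk (0:H) u))) (S (emk ξ (0:L))) := by rw [S.apply_symm_apply]
      _ = inner ℂ (S.symm (emk (0:H) u)) (emk ξ (0:L)) := S.inner_map_map _ _
      _ = inner ℂ (emk (0:H) u) (emk ξ (0:L)) := by rw [hfix]
      _ = 0 := by rw [emk_inner]; simp
  rw [← emk_eta (S (emk ξ (0:L))), emk_inner] at key
  simpa using key

lemma exists_fix (ξ : H) : ∃ τ v, S (emk ξ v) = emk τ v := by
  obtain ⟨v, hv⟩ := range_one_sub_Dop S ξ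
  rw [LinearMap.sub_apply, LinearMap.id_apply] at hv
  refine ⟨(S (emk ξ v)).fst, v, ?_⟩
  have hsplit : S (emk ξ v) = S (emk ξ 0) + S (emk 0 v) := by
    rw [← map_add]
    exact congrArg S (by rw [emk_add, add_zero, zero_add])
  have hsnd : (S (emk ξ v)).snd = v := by
    have h2 : (S (emk ξ v)).snd = (S (emk ξ 0)).snd + (S (emk 0 v)).snd := by rw [hsplit]; rfl
    rw [h2, ← Dop_apply, ← hv]
    exact sub_add_cancel v (Dop S v)
  conv_lhs => rw [← emk_eta (S (emk ξ v))]
  rw [hsnd]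

lemma tau_unique {ξ τ τ' : H} {v v' : L} (h : S (emk ξ v) = emk τ v)
    (h' : S (emk ξ v') = emk τ' v') : τ = τ' := by
  have hsub : S (emk (0:H) (v - v')) = emk (τ - τ') (v - v') := by
    have hs : S (emk ξ v) - S (emk ξ v') = emk τ v - emk τ' v' := by rw [h, h']
    rw [← map_sub, emk_sub, emk_sub, sub_self] at hs
    exact hs
  have hD : Dop S (v - v') = v - v' := by
    rw [Dop_apply, hsub]; rfl
  have hfix := fix_of_Dfix S (v - v') hD
  rw [hfix] at hsub
  have h0 : (0:H) = τ - τ' := (emk_inj hsub).1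
  have := h0.symm
  rw [sub_eq_zero] at this
  exact this

lemma tau_norm {ξ τ : H} {v : L} (h : S (emk ξ v) = emk τ v) : ‖τ‖ = ‖ξ‖ := by
  have hi := S.inner_map_map (emk ξ v) (emk ξ v)
  rw [h, emk_inner, emk_inner, add_left_inj] at hi
  have h3 : ‖τ‖ ^ 2 = ‖ξ‖ ^ 2 := by
    rw [← inner_self_eq_norm_sq (𝕜 := ℂ), ← inner_self_eq_norm_sq (𝕜 := ℂ), hi]
  nlinarith [norm_nonneg τ, norm_nonneg ξ]

noncomputable def tfun (ξ : H) : H := (exists_fix S ξ).choose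

lemma tfun_spec (ξ : H) : ∃ v, S (emk ξ v) = emk (tfun S ξ) v :=
  (exists_fix S ξ).choose_spec

noncomputable def Tl : H →ₗ[ℂ] H where
  toFun := tfun S
  map_add' ξ₁ ξ₂ := by
    obtain ⟨v₁, h₁⟩ := tfun_spec S ξ₁
    obtain ⟨v₂, h₂⟩ := tfun_spec S ξ₂
    obtain ⟨v, h⟩ := tfun_spec S (ξ₁ + ξ₂)
    have hsum : S (emk (ξ₁ + ξ₂) (v₁ + v₂)) = emk (tfun S ξ₁ + tfun S ξ₂) (v₁ + v₂) := by
      rw [← emk_add, ← emk_add, map_add, h₁, h₂]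
    exact tau_unique S h hsum
  map_smul' c ξ := by
    obtain ⟨v₁, h₁⟩ := tfun_spec S ξ
    obtain ⟨v, h⟩ := tfun_spec S (c • ξ)
    have hsm : S (emk (c • ξ) (c • v₁)) = emk (c • tfun S ξ) (c • v₁) := by
      rw [← emk_smul, ← emk_smul, map_smul, h₁]
    exact tau_unique S h hsm

noncomputable def Tli : H →ₗᵢ[ℂ] H :=
  ⟨Tl S, fun ξ => by
    obtain ⟨v, h⟩ := tfun_spec S ξ
    exact tau_norm S h⟩

end Stmt5Aux

open Stmt5Aux in
theorem stmt_5 {H L : Type*}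
    [NormedAddCommGroup H] [InnerProductSpace ℂ H] [FiniteDimensional ℂ H]
    [NormedAddCommGroup L] [InnerProductSpace ℂ L] [FiniteDimensional ℂ L]
    (S : WithLp 2 (H × L) ≃ₗᵢ[ℂ] WithLp 2 (H × L)) :
    ∃ T : H ≃ₗᵢ[ℂ] H, ∀ ξ : H,
      (∃ v : L, S ((WithLp.equiv 2 (H × L)).symm (ξ, v)) =
          (WithLp.equiv 2 (H × L)).symm (T ξ, v)) ∧
      (∀ (τ : H) (v : L), S ((WithLp.equiv 2 (H × L)).symm (ξ, v)) =
          (WithLp.equiv 2 (H × L)).symm (τ, v) → τ = T ξ) := by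
  refine ⟨(Tli S).toLinearIsometryEquiv rfl, fun ξ => ⟨?_, ?_⟩⟩
  · obtain ⟨v, h⟩ := tfun_spec S ξ
    refine ⟨v, ?_⟩
    have hTeq : ((Tli S).toLinearIsometryEquiv rfl) ξ = tfun S ξ :=
      (Tli S).toLinearIsometryEquiv_apply rfl ξ
    show S (emk ξ v) = emk (((Tli S).toLinearIsometryEquiv rfl) ξ) v
    rw [hTeq]
    exact h
  · intro τ v hv
    obtain ⟨v', h'⟩ := tfun_spec S ξ
    have hTeq : ((Tli S).toLinearIsometryEquiv rfl) ξ = tfun S ξ :=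
      (Tli S).toLinearIsometryEquiv_apply rfl ξ
    rw [hTeq]
    exact tau_unique S (show S (emk ξ v) = emk τ v from hv) h'
end

section
/- Fixed-point computation for the recurrent case of the quantum walk on the ray: let 0 < p < 1/2, γ = √(p/(1−p)), and let R₁, R₂ be unitary operators on ℓ²(ℤ_{≥0}) such that for every nonnegative integer i, R₁ fixes |2i⟩ + γ|2i+1⟩ and negates |2i⟩ − γ^{-1}|2i+1⟩ (acting as identity outside the spans of such pairs), while R₂ fixes |0⟩, fixes |2i+1⟩ + γ|2i+2⟩ and negates |2i+1⟩ − γ^{-1}|2i+2⟩. Then the vector ψ = Σ_{j=0}^∞ γ^j |j⟩ ∈ ℓ²(ℤ_{≥0}) satisfies R₂R₁ψ = ψ. -/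
theorem stmt_9 (p γ : ℝ) (hp0 : 0 < p) (hp : p < 1/2)
    (hγ : γ = Real.sqrt (p / (1 - p)))
    (R₁ R₂ : lp (fun _ : ℕ => ℂ) 2 ≃ₗᵢ[ℂ] lp (fun _ : ℕ => ℂ) 2)
    (e : ℕ → lp (fun _ : ℕ => ℂ) 2) (he : ∀ j, e j = lp.single 2 j (1 : ℂ))
    (hR₁fix : ∀ i : ℕ,
      R₁ (e (2*i) + (γ : ℂ) • e (2*i + 1)) = e (2*i) + (γ : ℂ) • e (2*i + 1))
    (hR₁neg : ∀ i : ℕ,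
      R₁ (e (2*i) - ((γ⁻¹ : ℝ) : ℂ) • e (2*i + 1)) =
        -(e (2*i) - ((γ⁻¹ : ℝ) : ℂ) • e (2*i + 1)))
    (hR₂zero : R₂ (e 0) = e 0)
    (hR₂fix : ∀ i : ℕ,
      R₂ (e (2*i + 1) + (γ : ℂ) • e (2*i + 2)) = e (2*i + 1) + (γ : ℂ) • e (2*i + 2))
    (hR₂neg : ∀ i : ℕ,
      R₂ (e (2*i + 1) - ((γ⁻¹ : ℝ) : ℂ) • e (2*i + 2)) =
        -(e (2*i + 1) - ((γ⁻¹ : ℝ) : ℂ) • e (2*i + 2)))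
    (ψ : lp (fun _ : ℕ => ℂ) 2) (hψ : ψ = ∑' j : ℕ, ((γ ^ j : ℝ) : ℂ) • e j) :
    R₂ (R₁ ψ) = ψ := by
  -- basic facts about γ
  have h1p : (0:ℝ) < 1 - p := by linarith
  have hq1 : p / (1 - p) < 1 := (div_lt_one h1p).2 (by linarith)
  have hq0 : 0 < p / (1 - p) := div_pos hp0 h1p
  have hγ0 : 0 < γ := hγ ▸ Real.sqrt_pos.2 hq0
  have hγ1 : γ < 1 := by
    rw [hγ]
    calc Real.sqrt (p / (1 - p)) < Real.sqrt 1 :=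
          Real.sqrt_lt_sqrt hq0.le hq1
      _ = 1 := Real.sqrt_one
  set f : ℕ → lp (fun _ : ℕ => ℂ) 2 := fun j => ((γ ^ j : ℝ) : ℂ) • e j with hf
  have hnorm : ∀ j, ‖f j‖ = γ ^ j := by
    intro j
    have he1 : ‖e j‖ = 1 := by
      rw [he j]
      have := lp.norm_single (E := fun _ : ℕ => ℂ) (p := 2) (by norm_num) j (1 : ℂ)
      simpa using this
    rw [hf]
    simp only [norm_smul, he1, mul_one, Complex.norm_real, Real.norm_eq_abs,
      abs_of_nonneg (pow_nonneg hγ0.le j)]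
  have hsum : Summable f := by
    apply Summable.of_norm
    have : Summable fun j : ℕ => γ ^ j :=
      summable_geometric_of_lt_one hγ0.le hγ1
    simpa [hnorm] using this
  have hsum1 : Summable fun j => f (2 * j) :=
    hsum.comp_injective (fun a b h => by omega)
  have hsum2 : Summable fun j => f (2 * j + 1) :=
    hsum.comp_injective (fun a b h => by omega)
  have hsum3 : Summable fun j => f (j + 1) :=
    hsum.comp_injective (fun a b h => by omega)
  have hsum4 : Summable fun j => f (2 * j + 2) :=
    hsum.comp_injective (fun a b h => by omega)
  -- pair identity
  have hpair : ∀ j : ℕ, f j + f (j + 1) = ((γ ^ j : ℝ) : ℂ) • (e j + (γ : ℂ) • e (j + 1)) := by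
    intro j
    rw [hf]
    simp only [smul_add, smul_smul, pow_succ]
    push_cast
    ring_nf
  -- ψ as sum of even pairs
  have key : ∀ (R : lp (fun _ : ℕ => ℂ) 2 ≃ₗᵢ[ℂ] lp (fun _ : ℕ => ℂ) 2),
      (∀ j, R (f (2 * j) + f (2 * j + 1)) = f (2 * j) + f (2 * j + 1)) → R ψ = ψ := by
    intro R hR
    have hsplit : ψ = ∑' j, (f (2 * j) + f (2 * j + 1)) := by
      rw [hψ, ← tsum_even_add_odd hsum1 hsum2, Summable.tsum_add hsum1 hsum2]
    have hT := (R.toContinuousLinearEquiv : lp (fun _ : ℕ => ℂ) 2 ≃L[ℂ]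
        lp (fun _ : ℕ => ℂ) 2).map_tsum (L := SummationFilter.unconditional ℕ) (f := fun j => f (2 * j) + f (2 * j + 1))
    have : R ψ = ∑' j, R (f (2 * j) + f (2 * j + 1)) := by
      rw [hsplit]; exact hT
    rw [this, hsplit]
    exact tsum_congr hR
  have hR₁ψ : R₁ ψ = ψ := by
    apply key
    intro j
    rw [hpair (2 * j), map_smul]
    rw [hR₁fix j]
  have hR₂ψ : R₂ ψ = ψ := by
    -- ψ = f 0 + ∑' (f (2j+1) + f (2j+2))
    have hsplit : ψ = f 0 + ∑' j, (f (2 * j + 1) + f (2 * j + 2)) := by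
      rw [hψ]
      rw [show (∑' j : ℕ, ((γ ^ j : ℝ) : ℂ) • e j) = ∑' j, f j from rfl]
      rw [Summable.tsum_eq_zero_add hsum]
      congr 1
      have h1 : (∑' k, f (2 * k + 1)) + ∑' k, f (2 * k + 2) = ∑' k, f (k + 1) := by
        have := tsum_even_add_odd (f := fun j => f (j + 1)) hsum2 hsum4
        simpa using this
      rw [← h1, ← Summable.tsum_add hsum2 hsum4]
    have hf0 : f 0 = e 0 := by simp [hf]
    rw [hsplit, map_add]
    congr 1
    · rw [hf0]; exact hR₂zero
    · refine ((R₂.toContinuousLinearEquiv : lp (fun _ : ℕ => ℂ) 2 ≃L[ℂ]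
        lp (fun _ : ℕ => ℂ) 2).map_tsum
          (L := SummationFilter.unconditional ℕ) (f := fun j => f (2 * j + 1) + f (2 * j + 2))).trans ?_
      apply tsum_congr
      intro j
      show R₂ (f (2 * j + 1) + f (2 * j + 2)) = _
      have := hpair (2 * j + 1)
      rw [show 2 * j + 1 + 1 = 2 * j + 2 from rfl] at this
      rw [this, map_smul, hR₂fix j]
  rw [hR₁ψ, hR₂ψ]
end

section
/- Phase-flip computation for the transient case of the quantum walk on the ray: let 1/2 < p < 1, γ = √(p/(1−p)) > 1, and let R₁, R₂ be as in the recurrent case (R₁ fixes |2i⟩ + γ|2i+1⟩ and negates |2i⟩ − γ^{-1}|2i+1⟩; R₂ fixes |0⟩, fixes |2i+1⟩ + γ|2i+2⟩, negates |2i+1⟩ − γ^{-1}|2i+2⟩). Then the vector ψ = Σ_{j=0}^∞ (−γ)^{-j}|j⟩ ∈ ℓ²(ℤ_{≥0}) satisfies R₂R₁ψ = −|0⟩ + Σ_{j=1}^∞ (−γ)^{-j}|j⟩, i.e. R₂R₁(|0⟩ ⊕ v) = (−|0⟩) ⊕ v where v = Σ_{j≥1}(−γ)^{-j}|j⟩.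 -/
theorem stmt_10 (p γ : ℝ) (hp : 1/2 < p) (hp1 : p < 1)
    (hγ : γ = Real.sqrt (p / (1 - p)))
    (R₁ R₂ : lp (fun _ : ℕ => ℂ) 2 ≃ₗᵢ[ℂ] lp (fun _ : ℕ => ℂ) 2)
    (e : ℕ → lp (fun _ : ℕ => ℂ) 2) (he : ∀ j, e j = lp.single 2 j (1 : ℂ))
    (hR₁fix : ∀ i : ℕ,
      R₁ (e (2*i) + (γ : ℂ) • e (2*i + 1)) = e (2*i) + (γ : ℂ) • e (2*i + 1))
    (hR₁neg : ∀ i : ℕ,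
      R₁ (e (2*i) - ((γ⁻¹ : ℝ) : ℂ) • e (2*i + 1)) =
        -(e (2*i) - ((γ⁻¹ : ℝ) : ℂ) • e (2*i + 1)))
    (hR₂zero : R₂ (e 0) = e 0)
    (hR₂fix : ∀ i : ℕ,
      R₂ (e (2*i + 1) + (γ : ℂ) • e (2*i + 2)) = e (2*i + 1) + (γ : ℂ) • e (2*i + 2))
    (hR₂neg : ∀ i : ℕ,
      R₂ (e (2*i + 1) - ((γ⁻¹ : ℝ) : ℂ) • e (2*i + 2)) =
        -(e (2*i + 1) - ((γ⁻¹ : ℝ) : ℂ) • e (2*i + 2)))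
    (ψ v : lp (fun _ : ℕ => ℂ) 2)
    (hψ : ψ = ∑' j : ℕ, ((((-γ)⁻¹) ^ j : ℝ) : ℂ) • e j)
    (hv : v = ∑' j : ℕ, ((((-γ)⁻¹) ^ (j + 1) : ℝ) : ℂ) • e (j + 1)) :
    R₂ (R₁ ψ) = -(e 0) + v := by
  have h1p : 0 < 1 - p := by linarith
  have hγ1 : 1 < γ := by
    have h2 : (1:ℝ) < p / (1 - p) := by
      rw [lt_div_iff₀ h1p]; linarith
    calc (1:ℝ) = Real.sqrt 1 := by simp
      _ < Real.sqrt (p / (1 - p)) := Real.sqrt_lt_sqrt (by norm_num) h2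
      _ = γ := hγ.symm
  have hγ0 : 0 < γ := by linarith
  set a : ℕ → ℂ := fun j => ((((-γ)⁻¹) ^ j : ℝ) : ℂ) with ha
  set f : ℕ → lp (fun _ : ℕ => ℂ) 2 := fun j => a j • e j with hf
  have hnorm_e : ∀ j, ‖e j‖ = 1 := by
    intro j
    rw [he j]
    have := lp.norm_single (p := 2) (E := fun _ : ℕ => ℂ) (by norm_num) j (1:ℂ)
    simpa using this
  have hrlt : γ⁻¹ < 1 := inv_lt_one_of_one_lt₀ hγ1
  have hsum : Summable f := by
    apply Summable.of_norm
    have : ∀ j, ‖f j‖ = (γ⁻¹) ^ j := by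
      intro j
      rw [hf, norm_smul, hnorm_e, mul_one, ha]
      simp [abs_inv, abs_of_pos hγ0]
    rw [funext this]
    exact summable_geometric_of_lt_one (by positivity) hrlt
  have hstep : ∀ j : ℕ, a (j + 1) = -(((γ⁻¹ : ℝ) : ℂ)) * a j := by
    intro j
    rw [ha]
    push_cast
    ring
  have hfstep : ∀ j : ℕ, f (j + 1) = a j • (-(((γ⁻¹ : ℝ) : ℂ)) • e (j + 1)) := by
    intro j
    show a (j+1) • e (j+1) = _
    rw [hstep, smul_smul, mul_comm]
  have hpair₁ : ∀ k : ℕ, f (2*k) + f (2*k+1)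
      = a (2*k) • (e (2*k) - ((γ⁻¹ : ℝ) : ℂ) • e (2*k + 1)) := by
    intro k
    rw [smul_sub, hfstep (2*k)]
    simp [hf, neg_smul, smul_smul, sub_eq_add_neg]
  have hpair₂ : ∀ k : ℕ, f (2*k+1) + f (2*k+2)
      = a (2*k+1) • (e (2*k+1) - ((γ⁻¹ : ℝ) : ℂ) • e (2*k + 2)) := by
    intro k
    rw [smul_sub, hfstep (2*k+1)]
    simp [hf, neg_smul, smul_smul, sub_eq_add_neg]
  have heven : Summable (fun k => f (2*k)) :=
    hsum.comp_injective (fun x y h => by omega)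
  have hodd : Summable (fun k => f (2*k+1)) :=
    hsum.comp_injective (fun x y h => by omega)
  have hodd' : Summable (fun k => f (2*k+2)) :=
    hsum.comp_injective (fun x y h => by omega)
  have hψf : ψ = ∑' j, f j := hψ
  have hvf : v = ∑' j, f (j+1) := hv
  have hψev : ψ = ∑' k, (f (2*k) + f (2*k+1)) := by
    rw [hψf, ← tsum_even_add_odd heven hodd, Summable.tsum_add heven hodd]
  have hψ0v : ψ = e 0 + v := by
    rw [hψf, Summable.tsum_eq_zero_add hsum, hvf, hf, ha]
    norm_num
  have hvodd : v = ∑' k, (f (2*k+1) + f (2*k+2)) := by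
    rw [hvf, ← tsum_even_add_odd (f := fun j => f (j+1)) hodd hodd',
      Summable.tsum_add hodd hodd']
  have hmap : ∀ (R : lp (fun _ : ℕ => ℂ) 2 ≃ₗᵢ[ℂ] lp (fun _ : ℕ => ℂ) 2)
      (g : ℕ → lp (fun _ : ℕ => ℂ) 2), R (∑' k, g k) = ∑' k, R (g k) :=
    fun R g => R.toContinuousLinearEquiv.map_tsum
  have hR₁ψ : R₁ ψ = -ψ := by
    rw [hψev, hmap R₁]
    have : ∀ k, R₁ (f (2*k) + f (2*k+1)) = -(f (2*k) + f (2*k+1)) := by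
      intro k
      rw [hpair₁, map_smul, hR₁neg, smul_neg, ← hpair₁]
    rw [tsum_congr this, tsum_neg]
  have hR₂v : R₂ v = -v := by
    rw [hvodd, hmap R₂]
    have : ∀ k, R₂ (f (2*k+1) + f (2*k+2)) = -(f (2*k+1) + f (2*k+2)) := by
      intro k
      rw [hpair₂, map_smul, hR₂neg, smul_neg, ← hpair₂]
    rw [tsum_congr this, tsum_neg]
  rw [hR₁ψ, map_neg, hψ0v, map_add, hR₂zero, hR₂v]
  abel
end
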